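/- For every positive integer r and every real x with 0 ≤ x ≤ 2π, ∑_{n=1}^∞ sin(nx)/n^{2r+1} = ∑_{k=1}^{r} (−1)^{k−1} x^{2k−1} ζ(2r+2−2k)/(2k−1)! + (−1)^r ( (π/2)·x^{2r}/(2r)! − (1/2)·x^{2r+1}/(2r+1)! ). -/

import Mathlib

open Real

/-- The Riemann zeta function at natural arguments `s > 1`, as a real series. -/
noncomputable def zetaR (s : ℕ) : ℝ := ∑' n : ℕ, 1 / (n + 1 : ℝ) ^ s

open scoped Nat

lemma zetaR_even (m : ℕ) (hm : m ≠ 0) :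
    zetaR (2*m) = (-1 : ℝ) ^ (m + 1) * 2 ^ (2*m - 1) * π ^ (2*m) *
      (bernoulli (2*m) : ℝ) / (2*m)! := by
  have h := hasSum_zeta_nat (k := m) hm
  have h0 : (1 : ℝ) / ((0:ℕ):ℝ) ^ (2*m) = 0 := by
    simp [pow_eq_zero_iff, hm]
  have h1 : HasSum (fun n : ℕ => 1 / ((n:ℝ) + 1) ^ (2*m))
      ((-1 : ℝ) ^ (m + 1) * 2 ^ (2*m - 1) * π ^ (2*m) * (bernoulli (2*m) : ℝ) / (2*m)!) := by
    have := (hasSum_nat_add_iff' (f := fun n : ℕ => 1 / ((n:ℝ)) ^ (2*m)) 1).mpr h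
    have hz : ((0:ℝ) ^ (2*m))⁻¹ = 0 := by simp [pow_eq_zero_iff, hm]
    simpa [hz] using this
  exact h1.tsum_eq

lemma bern_eval (n : ℕ) (t : ℝ) :
    ((Polynomial.bernoulli n).map (algebraMap ℚ ℝ)).eval t
      = ∑ i ∈ Finset.range (n+1), ((bernoulli i : ℝ) * (n.choose i)) * t^(n-i) := by
  simp [Polynomial.bernoulli, Polynomial.eval_finset_sum, mul_comm]

lemma sum_pair (r : ℕ) (f : ℕ → ℝ) :
    ∑ i ∈ Finset.range (2*(r+1)), f i = ∑ j ∈ Finset.range (r+1), (f (2*j) + f (2*j+1)) := by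
  induction r with
  | zero => simp [Finset.sum_range_succ]
  | succ n ih =>
    have h2 : 2*(n+2) = (2*(n+1)) + 1 + 1 := by ring
    rw [h2, Finset.sum_range_succ, Finset.sum_range_succ, ih]
    simp only [Finset.sum_range_succ]
    ring

lemma bern_eval_odd (r : ℕ) (t : ℝ) :
    ((Polynomial.bernoulli (2*r+1)).map (algebraMap ℚ ℝ)).eval t
      = (∑ j ∈ Finset.range (r+1),
          (bernoulli (2*j) : ℝ) * ((2*r+1).choose (2*j)) * t^(2*r+1-2*j))
        - (2*r+1)/2 * t^(2*r) := by
  rw [bern_eval]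
  have h : (2*r+1)+1 = 2*(r+1) := by ring
  rw [h, sum_pair, Finset.sum_add_distrib]
  have h2 : ∑ j ∈ Finset.range (r+1),
      ((bernoulli (2*j+1) : ℝ) * ((2*r+1).choose (2*j+1))) * t^(2*r+1-(2*j+1))
      = - ((2*r+1)/2 * t^(2*r)) := by
    rw [Finset.sum_eq_single 0]
    · have he : 2*r+1-(2*0+1) = 2*r := by omega
      rw [he, bernoulli_one, Nat.mul_zero, Nat.zero_add, Nat.choose_one_right]
      push_cast
      ring
    · intro j _ hj
      have : bernoulli (2*j+1) = 0 := by
        have := bernoulli'_eq_zero_of_odd (n := 2*j+1) ⟨j, by ring⟩ (by omega)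
        simp [bernoulli, this]
      simp [this]
    · simp
  rw [h2]
  ring

lemma const_eq (r : ℕ) (hr : 0 < r) (x : ℝ) :
    (-1:ℝ)^(r+1) * (2*π)^(2*r+1) / 2 / (2*r+1)! *
      ((Polynomial.map (algebraMap ℚ ℝ) (Polynomial.bernoulli (2*r+1))).eval (x/(2*π)))
    = (∑ k ∈ Finset.Icc 1 r,
        (-1:ℝ)^(k-1) * x^(2*k-1) * zetaR (2*r+2-2*k) / (Nat.factorial (2*k-1)))
      + (-1:ℝ)^r * (π/2 * x^(2*r) / (Nat.factorial (2*r))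
          - 1/2 * x^(2*r+1) / (Nat.factorial (2*r+1))) := by
  have hπ : (0:ℝ) < π := Real.pi_pos
  rw [bern_eval_odd]
  set t : ℝ := x / (2*π) with ht
  set c : ℝ := (-1:ℝ)^(r+1) * (2*π)^(2*r+1) / 2 / (2*r+1)! with hc
  -- split off j = 0 term of the Bernoulli sum
  rw [Finset.sum_range_succ']
  have hf0 : (bernoulli (2*0) : ℝ) * ((2*r+1).choose (2*0)) * t^(2*r+1-2*0) = t^(2*r+1) := by
    simp
  rw [hf0]
  -- rewrite the Icc sum as a range sum
  have hIcc : (∑ k ∈ Finset.Icc 1 r,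
        (-1:ℝ)^(k-1) * x^(2*k-1) * zetaR (2*r+2-2*k) / (Nat.factorial (2*k-1)))
      = ∑ i ∈ Finset.range r,
        (-1:ℝ)^((1+i)-1) * x^(2*(1+i)-1) * zetaR (2*r+2-2*(1+i)) /
          (Nat.factorial (2*(1+i)-1)) := by
    rw [show Finset.Icc 1 r = Finset.Ico 1 (r+1) by rfl, Finset.sum_Ico_eq_sum_range]
    simp
  rw [hIcc]
  -- reflect the range sum
  rw [← Finset.sum_range_reflect (fun i =>
        (-1:ℝ)^((1+i)-1) * x^(2*(1+i)-1) * zetaR (2*r+2-2*(1+i)) /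
          (Nat.factorial (2*(1+i)-1))) r]
  have hmain : c * (∑ i ∈ Finset.range r,
        (bernoulli (2*(i+1)) : ℝ) * ((2*r+1).choose (2*(i+1))) * t^(2*r+1-2*(i+1)))
      = ∑ i ∈ Finset.range r,
        (-1:ℝ)^((1+(r-1-i))-1) * x^(2*(1+(r-1-i))-1) * zetaR (2*r+2-2*(1+(r-1-i))) /
          (Nat.factorial (2*(1+(r-1-i))-1)) := by
    rw [Finset.mul_sum]
    refine Finset.sum_congr rfl ?_
    intro i hi
    rw [Finset.mem_range] at hi
    obtain ⟨d, rfl⟩ : ∃ d, r = i + d + 1 := ⟨r - i - 1, by omega⟩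
    have e1 : 2*(i+d+1)+1-2*(i+1) = 2*d+1 := by omega
    have e2 : 1+(i+d+1-1-i) = d+1 := by omega
    have e3 : 2*(i+d+1)+2-2*(d+1) = 2*(i+1) := by omega
    have e4 : 2*(d+1)-1 = 2*d+1 := by omega
    rw [e1, e2, e3, e4]
    rw [zetaR_even (i+1) (by omega)]
    have e5 : 2*(i+1)-1 = 2*i+1 := by omega
    rw [e5]
    have hch : (((2*(i+d+1)+1).choose (2*(i+1)) : ℕ) : ℝ)
        = (2*(i+d+1)+1)! / ((2*(i+1))! * (2*d+1)!) := by
      rw [Nat.cast_choose ℝ (by omega), show 2*(i+d+1)+1 - 2*(i+1) = 2*d+1 from by omega]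
    rw [hch, hc, ht]
    have hfac : ∀ m : ℕ, ((m ! : ℕ) : ℝ) ≠ 0 := fun m =>
      Nat.cast_ne_zero.mpr (Nat.factorial_ne_zero m)
    have h1 := hfac (2*(i+d+1)+1)
    have h2 := hfac (2*(i+1))
    have h3 := hfac (2*d+1)
    have hd : (d+1)-1 = d := by omega
    rw [hd]
    rw [div_pow]
    field_simp
    ring
  have hrest : c * t^(2*r+1) - c * ((2*(r:ℝ)+1)/2 * t^(2*r))
      = (-1:ℝ)^r * (π/2 * x^(2*r) / (Nat.factorial (2*r))
          - 1/2 * x^(2*r+1) / (Nat.factorial (2*r+1))) := by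
    have hfac : ∀ m : ℕ, ((m ! : ℕ) : ℝ) ≠ 0 := fun m =>
      Nat.cast_ne_zero.mpr (Nat.factorial_ne_zero m)
    have h1 := hfac (2*r)
    have h2 := hfac (2*r+1)
    have hfs : (((2*r+1)! : ℕ) : ℝ) = (2*(r:ℝ)+1) * ((2*r)! : ℕ) := by
      rw [show (2*r+1)! = (2*r+1) * (2*r)! from Nat.factorial_succ (2*r)]
      push_cast
      ring
    rw [hc, ht, div_pow, div_pow, hfs]
    have h2π : (2*π) ≠ 0 := by positivity
    field_simp
    ring
  rw [mul_sub, mul_add, hmain]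
  linear_combination hrest

theorem stmt_3 (r : ℕ) (hr : 0 < r) (x : ℝ) (hx0 : 0 ≤ x) (hx : x ≤ 2 * π) :
    HasSum (fun n : ℕ => Real.sin ((n + 1 : ℝ) * x) / (n + 1 : ℝ) ^ (2 * r + 1))
      ((∑ k ∈ Finset.Icc 1 r,
          (-1 : ℝ) ^ (k - 1) * x ^ (2 * k - 1) * zetaR (2 * r + 2 - 2 * k) /
            (Nat.factorial (2 * k - 1)))
        + (-1 : ℝ) ^ r *
          (π / 2 * x ^ (2 * r) / (Nat.factorial (2 * r))
            - 1 / 2 * x ^ (2 * r + 1) / (Nat.factorial (2 * r + 1)))) := by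
  have hπ : (0:ℝ) < π := Real.pi_pos
  have htm : x / (2*π) ∈ Set.Icc (0:ℝ) 1 :=
    ⟨div_nonneg hx0 (by positivity), by
      rw [div_le_one (by positivity)]; simpa using hx⟩
  have h := hasSum_one_div_nat_pow_mul_sin (k := r) hr.ne' htm
  have h1 := (hasSum_nat_add_iff'
    (f := fun n : ℕ => 1 / ((n:ℝ)) ^ (2*r+1) * Real.sin (2*π*(n:ℝ)*(x/(2*π)))) 1).mpr h
  rw [← const_eq r hr x]
  have h0 : ∑ i ∈ Finset.range 1,
      (1 / ((i:ℝ)) ^ (2*r+1) * Real.sin (2*π*(i:ℝ)*(x/(2*π)))) = 0 := by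
    simp
  rw [h0, sub_zero] at h1
  convert h1 using 2 with n
  · rfl
  push_cast
  have : 2*π*((n:ℝ)+1)*(x/(2*π)) = ((n:ℝ)+1)*x := by
    field_simp
  rw [this]
  ring
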